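/- Let z ∈ ℂ with |Re(z)| ≥ 1/2 and let y ∈ ℝ. Then |z|⁴ / |z² + y²|² ≤ 32 (y² + 1). -/

import Mathlib

lemma key_aux (u v t : ℝ) (hu : 1/4 ≤ u) (hv : 0 ≤ v) (ht : 0 ≤ t) :
    (u + v)^2 ≤ 32 * (t + 1) * ((u - v + t)^2 + 4*u*v) := by
  have hu0 : 0 ≤ u := by linarith
  rcases le_or_gt v ((u + t)/2) with h | h
  · nlinarith [sq_nonneg (u - v + t), sq_nonneg (u + t - 2*v), mul_nonneg ht hv,
      mul_nonneg (mul_nonneg ht ht) hv, mul_nonneg hv ht, sq_nonneg (u+t)]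
  · rcases le_or_gt v (2*(u + t)) with h2 | h2
    · nlinarith [mul_nonneg hu0 hv, mul_nonneg ht hv, sq_nonneg (u - v + t),
        mul_nonneg (mul_nonneg ht hu0) hv, mul_nonneg ht ht, sq_nonneg (u+t-v)]
    · nlinarith [sq_nonneg (u - v + t), mul_nonneg hu0 hv, mul_nonneg ht hv,
        sq_nonneg (2*u + 2*t - v)]

theorem stmt_2 (z : ℂ) (y : ℝ) (hz : 1 / 2 ≤ |z.re|) :
    ‖z‖ ^ 4 / ‖z ^ 2 + (y : ℂ) ^ 2‖ ^ 2 ≤ 32 * (y ^ 2 + 1) := by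
  set a := z.re with ha
  set b := z.im with hb
  have hu : 1/4 ≤ a^2 := by nlinarith [sq_abs a, sq_nonneg (|a| - 1/2)]
  have h1 : ‖z‖ ^ 4 = (a^2 + b^2)^2 := by
    rw [show (4:ℕ) = 2*2 from rfl, pow_mul, Complex.sq_norm, Complex.normSq_apply]
    ring
  have h2 : ‖z ^ 2 + (y : ℂ) ^ 2‖ ^ 2
      = (a^2 - b^2 + y^2)^2 + (2*a*b)^2 := by
    rw [Complex.sq_norm, Complex.normSq_apply]
    simp [pow_two, Complex.add_re, Complex.add_im, Complex.mul_re, Complex.mul_im]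
    ring
  have hD : 0 < (a^2 - b^2 + y^2)^2 + (2*a*b)^2 := by
    rcases eq_or_ne b 0 with hb0 | hb0
    · have h3 : 0 < a^2 - b^2 + y^2 := by rw [hb0]; nlinarith [sq_nonneg y]
      positivity
    · have ha0 : a ≠ 0 := by intro h; rw [h] at hu; norm_num at hu
      have : 0 < (2*a*b)^2 := by positivity
      positivity
  rw [h1, h2, div_le_iff₀ hD]
  have := key_aux (a^2) (b^2) (y^2) hu (sq_nonneg b) (sq_nonneg y)
  nlinarith [this]
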